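/- Let Y ∈ ℝ^{m×k} be a matrix with full column rank and QR decomposition Y = U₁R with U₁ having orthonormal columns and R ∈ ℝ^{k×k} invertible. Then for any row index set J such that Y(J,:) has full column rank, ‖U₁(J,:)†‖ ≤ ‖Y(J,:)†‖ · ‖Y‖. -/

import Mathlib

open Matrix

noncomputable def specNorm {m n : Type*} [Fintype m] [Fintype n] [DecidableEq n]
    (A : Matrix m n ℝ) : ℝ :=
  ‖LinearMap.toContinuousLinearMap (Matrix.toEuclideanLin A)‖

noncomputable def sMin {m n : Type*} [Fintype m] [Fintype n] [DecidableEq n]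
    (A : Matrix m n ℝ) : ℝ :=
  Real.sqrt (⨅ i, (show (Aᵀ * A).IsHermitian by simpa [Matrix.conjTranspose_eq_transpose_of_trivial] using Matrix.isHermitian_conjTranspose_mul_self A).eigenvalues i)

noncomputable def singVals {m n : ℕ} (A : Matrix (Fin m) (Fin n) ℝ) : Fin n → ℝ :=
  fun i =>
    Real.sqrt ((show (Aᵀ * A).IsHermitian by simpa [Matrix.conjTranspose_eq_transpose_of_trivial] using Matrix.isHermitian_conjTranspose_mul_self A).eigenvalues
      (Tuple.sort (show (Aᵀ * A).IsHermitian by simpa [Matrix.conjTranspose_eq_transpose_of_trivial] using Matrix.isHermitian_conjTranspose_mul_self A).eigenvalues i.rev))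

noncomputable def pinv {m n : Type*} [Fintype m] [Fintype n] (A : Matrix m n ℝ) : Matrix n m ℝ :=
  open Classical in
  if h : ∃ B : Matrix n m ℝ,
      A * B * A = A ∧ B * A * B = B ∧ (A * B)ᵀ = A * B ∧ (B * A)ᵀ = B * A
  then h.choose else 0

lemma toEuclideanLin_mul_apply {a b c : Type*} [Fintype a] [Fintype b] [Fintype c]
    [DecidableEq b] [DecidableEq c] (A : Matrix a b ℝ) (B : Matrix b c ℝ)
    (x : EuclideanSpace ℝ c) :
    Matrix.toEuclideanLin (A * B) x = Matrix.toEuclideanLin A (Matrix.toEuclideanLin B x) := by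
  simp [Matrix.toEuclideanLin_apply, Matrix.mulVec_mulVec]

lemma specNorm_apply_le {a b : Type*} [Fintype a] [Fintype b] [DecidableEq b]
    (A : Matrix a b ℝ) (x : EuclideanSpace ℝ b) :
    ‖Matrix.toEuclideanLin A x‖ ≤ specNorm A * ‖x‖ := by
  have := (LinearMap.toContinuousLinearMap (Matrix.toEuclideanLin A)).le_opNorm x
  simpa [specNorm] using this

lemma specNorm_le_bound {a b : Type*} [Fintype a] [Fintype b] [DecidableEq b]
    (A : Matrix a b ℝ) (C : ℝ) (hC : 0 ≤ C)
    (h : ∀ x : EuclideanSpace ℝ b, ‖Matrix.toEuclideanLin A x‖ ≤ C * ‖x‖) :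
    specNorm A ≤ C := by
  apply ContinuousLinearMap.opNorm_le_bound _ hC
  intro x
  simpa using h x

lemma specNorm_mul_le {a b c : Type*} [Fintype a] [Fintype b] [Fintype c]
    [DecidableEq b] [DecidableEq c] (A : Matrix a b ℝ) (B : Matrix b c ℝ) :
    specNorm (A * B) ≤ specNorm A * specNorm B := by
  apply specNorm_le_bound _ _ (mul_nonneg (norm_nonneg _) (norm_nonneg _))
  intro x
  rw [toEuclideanLin_mul_apply]
  calc ‖Matrix.toEuclideanLin A (Matrix.toEuclideanLin B x)‖
      ≤ specNorm A * ‖Matrix.toEuclideanLin B x‖ := specNorm_apply_le _ _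
    _ ≤ specNorm A * (specNorm B * ‖x‖) := by
        exact mul_le_mul_of_nonneg_left (specNorm_apply_le _ _) (norm_nonneg _)
    _ = specNorm A * specNorm B * ‖x‖ := by ring

lemma pinv_eq {a b : Type*} [Fintype a] [Fintype b] (A : Matrix a b ℝ) (B : Matrix b a ℝ)
    (h1 : A * B * A = A) (h2 : B * A * B = B) (h3 : (A * B)ᵀ = A * B)
    (h4 : (B * A)ᵀ = B * A) : pinv A = B := by
  have hex : ∃ B : Matrix b a ℝ,
      A * B * A = A ∧ B * A * B = B ∧ (A * B)ᵀ = A * B ∧ (B * A)ᵀ = B * A :=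
    ⟨B, h1, h2, h3, h4⟩
  rw [pinv, dif_pos hex]
  obtain ⟨c1, c2, c3, c4⟩ := hex.choose_spec
  set C := hex.choose with hC
  have hAB : A * C = A * B := by
    calc A * C = (A * B * A) * C := by rw [h1]
      _ = (A * B) * (A * C) := by rw [Matrix.mul_assoc]
      _ = (A * B)ᵀ * (A * C)ᵀ := by rw [h3, c3]
      _ = Bᵀ * ((A * C * A)ᵀ) := by
          simp only [Matrix.transpose_mul, Matrix.mul_assoc]
      _ = Bᵀ * Aᵀ := by rw [c1]
      _ = (A * B)ᵀ := by rw [Matrix.transpose_mul]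
      _ = A * B := h3
  have hBA : C * A = B * A := by
    calc C * A = C * (A * B * A) := by rw [h1]
      _ = (C * A) * (B * A) := by simp only [Matrix.mul_assoc]
      _ = (C * A)ᵀ * (B * A)ᵀ := by rw [h4, c4]
      _ = ((A * (C * A))ᵀ) * Bᵀ := by
          simp only [Matrix.transpose_mul, Matrix.mul_assoc]
      _ = ((A * C * A)ᵀ) * Bᵀ := by rw [Matrix.mul_assoc]
      _ = Aᵀ * Bᵀ := by rw [c1]
      _ = (B * A)ᵀ := by rw [Matrix.transpose_mul]
      _ = B * A := h4
  calc C = C * A * C := c2.symm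
    _ = B * A * C := by rw [hBA]
    _ = B * (A * C) := by rw [Matrix.mul_assoc]
    _ = B * (A * B) := by rw [hAB]
    _ = B * A * B := by rw [Matrix.mul_assoc]
    _ = B := h2

lemma isUnit_of_rank_eq {k : ℕ} (M : Matrix (Fin k) (Fin k) ℝ) (h : M.rank = k) :
    IsUnit M := by
  rw [← Matrix.mulVec_surjective_iff_isUnit]
  have : LinearMap.range M.mulVecLin = ⊤ := by
    apply Submodule.eq_top_of_finrank_eq
    rw [← Matrix.rank, h, Module.finrank_pi]
    simp
  intro y
  have : y ∈ LinearMap.range M.mulVecLin := this ▸ Submodule.mem_top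
  obtain ⟨x, hx⟩ := this
  exact ⟨x, hx⟩

theorem pinv_submatrix_qr_bound {m k l : ℕ} (Y U1 : Matrix (Fin m) (Fin k) ℝ)
    (R : Matrix (Fin k) (Fin k) ℝ) (hQR : Y = U1 * R) (hU1 : U1ᵀ * U1 = 1)
    (hR : IsUnit R) (hYrank : Y.rank = k) (J : Fin l ↪ Fin m)
    (hJ : (Y.submatrix J id).rank = k) :
    specNorm (pinv (U1.submatrix J id)) ≤
      specNorm (pinv (Y.submatrix J id)) * specNorm Y := by
  classical
  set A := Y.submatrix J id with hA
  set G := Aᵀ * A with hGdef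
  -- G is invertible
  have hGrank : G.rank = k := by rw [hGdef, Matrix.rank_transpose_mul_self, hJ]
  have hG : IsUnit G := isUnit_of_rank_eq G hGrank
  have hGdet : IsUnit G.det := (Matrix.isUnit_iff_isUnit_det G).mp hG
  have hRdet : IsUnit R.det := (Matrix.isUnit_iff_isUnit_det R).mp hR
  set B := G⁻¹ * Aᵀ with hBdef
  have hBA : B * A = 1 := by
    rw [hBdef, Matrix.mul_assoc, ← hGdef, Matrix.nonsing_inv_mul G hGdet]
  have hGsymm : Gᵀ = G := by rw [hGdef, Matrix.transpose_mul, Matrix.transpose_transpose]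
  have hABsymm : (A * B)ᵀ = A * B := by
    rw [hBdef, ← Matrix.mul_assoc, Matrix.transpose_mul, Matrix.transpose_mul,
      Matrix.transpose_transpose, Matrix.transpose_nonsing_inv, hGsymm, Matrix.mul_assoc]
  have hpinvA : pinv A = B :=
    pinv_eq A B (by rw [Matrix.mul_assoc, hBA, Matrix.mul_one])
      (by rw [hBA, Matrix.one_mul]) hABsymm (by rw [hBA, Matrix.transpose_one])
  -- U1 submatrix
  have hYsub : A = U1.submatrix J id * R := by
    rw [hA, hQR, Matrix.submatrix_mul U1 R J id id Function.bijective_id,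
      Matrix.submatrix_id_id]
  have hU1sub : U1.submatrix J id = A * R⁻¹ := by
    rw [hYsub, Matrix.mul_assoc, Matrix.mul_nonsing_inv R hRdet, Matrix.mul_one]
  -- pinv of U1 submatrix
  have hARinv : A * R⁻¹ * (R * B) = A * B := by
    rw [Matrix.mul_assoc A R⁻¹, ← Matrix.mul_assoc R⁻¹, Matrix.nonsing_inv_mul R hRdet,
      Matrix.one_mul]
  have hRBA : R * B * (A * R⁻¹) = 1 := by
    rw [Matrix.mul_assoc R B, ← Matrix.mul_assoc B, hBA, Matrix.one_mul,
      Matrix.mul_nonsing_inv R hRdet]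
  have hpinvU1 : pinv (U1.submatrix J id) = R * B := by
    rw [hU1sub]
    apply pinv_eq
    · rw [hARinv, Matrix.mul_assoc A B, ← Matrix.mul_assoc B, hBA, Matrix.one_mul]
    · rw [hRBA, Matrix.one_mul]
    · rw [hARinv]; exact hABsymm
    · rw [hRBA, Matrix.transpose_one]
  -- R = U1ᵀ Y and norm of R bounded by norm of Y
  have hnorm : ∀ x : EuclideanSpace ℝ (Fin k),
      ‖Matrix.toEuclideanLin R x‖ = ‖Matrix.toEuclideanLin Y x‖ := by
    intro x
    have hinner : ∀ v : EuclideanSpace ℝ (Fin k),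
        (inner ℝ (Matrix.toEuclideanLin U1 v) (Matrix.toEuclideanLin U1 v) : ℝ)
          = inner ℝ v v := by
      intro v
      have hadj : Matrix.toEuclideanLin U1ᵀ = LinearMap.adjoint (Matrix.toEuclideanLin U1) := by
        rw [← Matrix.toEuclideanLin_conjTranspose_eq_adjoint,
          Matrix.conjTranspose_eq_transpose_of_trivial]
      calc (inner ℝ (Matrix.toEuclideanLin U1 v) (Matrix.toEuclideanLin U1 v) : ℝ)
          = inner ℝ (LinearMap.adjoint (Matrix.toEuclideanLin U1)
              (Matrix.toEuclideanLin U1 v)) v := by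
            rw [LinearMap.adjoint_inner_left]
        _ = inner ℝ (Matrix.toEuclideanLin (U1ᵀ * U1) v) v := by
            rw [toEuclideanLin_mul_apply, hadj]
        _ = inner ℝ v v := by
            rw [hU1]
            simp [Matrix.toEuclideanLin_apply, Matrix.one_mulVec]
    rw [hQR, toEuclideanLin_mul_apply]
    rw [norm_eq_sqrt_real_inner, norm_eq_sqrt_real_inner, hinner]
  have hRle : specNorm R ≤ specNorm Y := by
    apply specNorm_le_bound _ _ (norm_nonneg _)
    intro x
    rw [hnorm x]
    exact specNorm_apply_le Y x
  -- combine
  rw [hpinvU1, hpinvA]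
  calc specNorm (R * B) ≤ specNorm R * specNorm B := specNorm_mul_le R B
    _ ≤ specNorm Y * specNorm B :=
        mul_le_mul_of_nonneg_right hRle (norm_nonneg _)
    _ = specNorm B * specNorm Y := mul_comm _ _
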